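/- Under the hypotheses of the rank-one condition with M irreducible and aperiodic, with S_n = M(z) M(y_n), t = 2√δ_n · π S_n e, and m = |z| + |y_n| chosen as in the construction, the k+m-step transition probabilities satisfy P^{k+m}(α, 𝒪) ≥ α M^k S_n e − t for all α ∈ Δ and all k ≥ 0. -/

import Mathlib

open Matrix Filter
open scoped Classical

/-- The product `M(w) = M(w₁) ⋯ M(wₖ)` of a word. -/
def wordProd {s : ℕ} {Y : Type*} (M : Y → Matrix (Fin s) (Fin s) ℝ)
    {n : ℕ} (w : Fin n → Y) : Matrix (Fin s) (Fin s) ℝ :=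
  (List.ofFn (fun i => M (w i))).prod

/-- The k-step transition kernel of the α-chain. -/
noncomputable def Pker {s : ℕ} {Y : Type*} [Fintype Y]
    (M : Y → Matrix (Fin s) (Fin s) ℝ) (k : ℕ)
    (α : Fin s → ℝ) (A : Set (Fin s → ℝ)) : ℝ :=
  ∑ w : Fin k → Y,
    if ((∑ j, (α ᵥ* wordProd M w) j)⁻¹ • (α ᵥ* wordProd M w)) ∈ A
    then ∑ j, (α ᵥ* wordProd M w) j else 0

lemma listProd_nonneg {s : ℕ} (l : List (Matrix (Fin s) (Fin s) ℝ))
    (h : ∀ A ∈ l, ∀ i j, 0 ≤ A i j) : ∀ i j, 0 ≤ l.prod i j := by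
  induction l with
  | nil =>
    intro i j
    simp only [List.prod_nil, Matrix.one_apply]
    split <;> norm_num
  | cons A l ih =>
    intro i j
    rw [List.prod_cons, Matrix.mul_apply]
    exact Finset.sum_nonneg fun k _ =>
      mul_nonneg (h A (by simp) i k) (ih (fun B hB => h B (by simp [hB])) k j)

lemma wordProd_nonneg {s : ℕ} {Y : Type*} (M : Y → Matrix (Fin s) (Fin s) ℝ)
    (hpos : ∀ y i j, 0 ≤ M y i j) {n : ℕ} (w : Fin n → Y) :
    ∀ i j, 0 ≤ wordProd M w i j := by
  apply listProd_nonneg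
  intro A hA
  rw [List.mem_ofFn] at hA
  obtain ⟨i, rfl⟩ := hA
  exact hpos _

lemma wordProd_cons {s : ℕ} {Y : Type*} (M : Y → Matrix (Fin s) (Fin s) ℝ)
    {n : ℕ} (y : Y) (u : Fin n → Y) :
    wordProd M (Fin.cons y u) = M y * wordProd M u := by
  simp [wordProd, List.ofFn_succ]

lemma wordProd_append {s : ℕ} {Y : Type*} (M : Y → Matrix (Fin s) (Fin s) ℝ)
    {k m : ℕ} (u : Fin k → Y) (g : Fin m → Y) :
    wordProd M (Fin.append u g) = wordProd M u * wordProd M g := by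
  rw [wordProd, List.ofFn_add, List.prod_append]
  simp [wordProd, Fin.append_left, Fin.append_right]

lemma sum_wordProd {s : ℕ} {Y : Type*} [Fintype Y] (M : Y → Matrix (Fin s) (Fin s) ℝ) :
    ∀ n : ℕ, ∑ w : Fin n → Y, wordProd M w = (∑ y, M y) ^ n := by
  intro n
  induction n with
  | zero => simp [wordProd]
  | succ n ih =>
    rw [← (Fin.consEquiv (fun _ : Fin (n+1) => Y)).sum_comp]
    rw [Fintype.sum_prod_type]
    simp only [show ∀ (p : Y × (Fin n → Y)), (Fin.consEquiv fun _ => Y) p = Fin.cons p.1 p.2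
      from fun _ => rfl, wordProd_cons]
    rw [← Finset.sum_mul_sum, ih, pow_succ']

lemma sumVecMul {s : ℕ} (x : Fin s → ℝ) (A : Matrix (Fin s) (Fin s) ℝ) :
    ∑ j, (x ᵥ* A) j = ∑ i, x i * ∑ j, A i j := by
  simp_rw [Matrix.vecMul, dotProduct, Finset.mul_sum]
  exact Finset.sum_comm

lemma sum_sum_vecMul {s : ℕ} {ι : Type*} (x : Fin s → ℝ) (F : Finset ι)
    (A : ι → Matrix (Fin s) (Fin s) ℝ) :
    ∑ u ∈ F, ∑ i, (x ᵥ* A u) i = ∑ i, (x ᵥ* (∑ u ∈ F, A u)) i := by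
  simp_rw [Matrix.vecMul, dotProduct, Matrix.sum_apply, Finset.mul_sum]
  rw [Finset.sum_comm]
  refine Finset.sum_congr rfl fun i _ => ?_
  rw [Finset.sum_comm]

lemma vecMul_nonneg' {s : ℕ} {x : Fin s → ℝ} (hx : ∀ i, 0 ≤ x i)
    {A : Matrix (Fin s) (Fin s) ℝ} (hA : ∀ i j, 0 ≤ A i j) :
    ∀ j, 0 ≤ (x ᵥ* A) j := by
  intro j
  rw [Matrix.vecMul, dotProduct]
  exact Finset.sum_nonneg fun i _ => mul_nonneg (hx i) (hA i j)


set_option maxHeartbeats 1000000 in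
lemma core_est {s : ℕ} (S T : Matrix (Fin s) (Fin s) ℝ)
    (w v : Fin s → ℝ) (p δ : ℝ)
    (hp0 : 0 < p) (hδ0 : 0 ≤ δ) (hδ : δ < 1 / 4)
    (hS : S = p • ((Matrix.of fun i j => w i * v j) + δ • T))
    (hSnn : ∀ i j, 0 ≤ S i j)
    (hsv : ∑ j, v j = 1)
    (O : Set (Fin s → ℝ))
    (hO : ∀ β : Fin s → ℝ, (∑ i, |β i|) ≤ 1 →
      (1 + Real.sqrt δ * ∑ j, β j)⁻¹ • (v + Real.sqrt δ • β) ∈ O)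
    (b : Fin s → ℝ) (hbnn : ∀ i, 0 ≤ b i)
    (hγ1 : ∑ j, |(b ᵥ* T) j| ≤ ∑ i, |b i|) :
    (∑ j, (b ᵥ* S) j) - 2 * Real.sqrt δ * p * (∑ i, b i) ≤
      (if ((∑ j, (b ᵥ* S) j)⁻¹ • (b ᵥ* S)) ∈ O
        then ∑ j, (b ᵥ* S) j else 0) := by
  have hq : Real.sqrt δ * Real.sqrt δ = δ := Real.mul_self_sqrt hδ0
  have hq0 : 0 ≤ Real.sqrt δ := Real.sqrt_nonneg δ
  have hq1 : Real.sqrt δ < 1 := by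
    rw [show (1:ℝ) = Real.sqrt 1 by simp]
    exact Real.sqrt_lt_sqrt hδ0 (by linarith)
  set γ : Fin s → ℝ := b ᵥ* T with hγ
  set a : ℝ := b ⬝ᵥ w with ha
  set sb : ℝ := ∑ i, b i with hsb
  have hsb0 : 0 ≤ sb := Finset.sum_nonneg fun i _ => hbnn i
  have habs : ∑ i, |b i| = sb := Finset.sum_congr rfl fun i _ => abs_of_nonneg (hbnn i)
  have hγ1' : ∑ j, |γ j| ≤ sb := habs ▸ hγ1
  have hsg : |∑ j, γ j| ≤ sb := (Finset.abs_sum_le_sum_abs _ _).trans hγ1'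
  have hbS : ∀ j, (b ᵥ* S) j = p * (a * v j + δ * γ j) := by
    intro j
    have h2 : γ j = ∑ i, b i * T i j := rfl
    have h3 : (b ᵥ* S) j = ∑ i, b i * S i j := rfl
    rw [h3, h2, ha, dotProduct, hS]
    simp only [Matrix.smul_apply, Matrix.add_apply, Matrix.of_apply, smul_eq_mul]
    calc ∑ i, b i * (p * (w i * v j + δ * T i j))
        = ∑ i, (p * v j * (b i * w i) + p * δ * (b i * T i j)) :=
          Finset.sum_congr rfl fun i _ => by ring
      _ = p * v j * (∑ i, b i * w i) + p * δ * (∑ i, b i * T i j) := by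
          rw [Finset.sum_add_distrib, ← Finset.mul_sum, ← Finset.mul_sum]
      _ = p * ((∑ i, b i * w i) * v j + δ * ∑ i, b i * T i j) := by ring
  have hc : ∑ j, (b ᵥ* S) j = p * (a + δ * ∑ j, γ j) := by
    simp_rw [hbS, ← Finset.mul_sum, Finset.sum_add_distrib, ← Finset.mul_sum, hsv, mul_one]
  by_cases hgood : 0 < a ∧ Real.sqrt δ * sb ≤ a
  · obtain ⟨ha0, hga⟩ := hgood
    have e1 : -(δ * sb) ≤ δ * ∑ j, γ j := by
      have h1 := (abs_le.mp hsg).1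
      nlinarith
    have e2 : δ * sb = Real.sqrt δ * (Real.sqrt δ * sb) := by rw [← mul_assoc, hq]
    have e3 : Real.sqrt δ * (Real.sqrt δ * sb) ≤ Real.sqrt δ * a :=
      mul_le_mul_of_nonneg_left hga hq0
    have e4 : Real.sqrt δ * a < a := by nlinarith
    have hD0 : 0 < a + δ * ∑ j, γ j := by linarith
    have hc0 : 0 < ∑ j, (b ᵥ* S) j := by rw [hc]; exact mul_pos hp0 hD0
    set β₀ : Fin s → ℝ := (Real.sqrt δ / a) • γ with hβ₀
    have hqa0 : 0 ≤ Real.sqrt δ / a := div_nonneg hq0 ha0.le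
    have hβ₀n : ∑ i, |β₀ i| ≤ 1 := by
      have habs₀ : ∑ i, |β₀ i| = (Real.sqrt δ / a) * ∑ i, |γ i| := by
        rw [Finset.mul_sum]
        refine Finset.sum_congr rfl fun i _ => ?_
        rw [hβ₀, Pi.smul_apply, smul_eq_mul, abs_mul, abs_of_nonneg hqa0]
      rw [habs₀, div_mul_eq_mul_div, div_le_one ha0]
      exact le_trans (mul_le_mul_of_nonneg_left hγ1' hq0) hga
    have hmem := hO β₀ hβ₀n
    have hsb0m : ∑ j, β₀ j = (Real.sqrt δ / a) * ∑ j, γ j := by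
      rw [Finset.mul_sum]
      exact Finset.sum_congr rfl fun j _ => by rw [hβ₀, Pi.smul_apply, smul_eq_mul]
    have heq : ((∑ j, (b ᵥ* S) j)⁻¹ • (b ᵥ* S))
        = (1 + Real.sqrt δ * ∑ j, β₀ j)⁻¹ • (v + Real.sqrt δ • β₀) := by
      funext j
      rw [Pi.smul_apply, smul_eq_mul, Pi.smul_apply, smul_eq_mul, Pi.add_apply,
        Pi.smul_apply, smul_eq_mul, hsb0m, hβ₀, Pi.smul_apply, smul_eq_mul, hbS, hc]
      have ha' : a ≠ 0 := ne_of_gt ha0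
      have hp' : p ≠ 0 := ne_of_gt hp0
      have hD' : a + δ * (∑ j, γ j) ≠ 0 := ne_of_gt hD0
      have hX1 : Real.sqrt δ * (Real.sqrt δ / a * ∑ j, γ j) = δ * (∑ j, γ j) / a := by
        rw [div_mul_eq_mul_div, ← mul_div_assoc, ← mul_assoc, hq]
      have hX2 : Real.sqrt δ * (Real.sqrt δ / a * γ j) = δ * γ j / a := by
        rw [div_mul_eq_mul_div, ← mul_div_assoc, ← mul_assoc, hq]
      rw [hX1, hX2]
      field_simp
    rw [if_pos (by rw [heq]; exact hmem)]
    have hbd : 0 ≤ 2 * Real.sqrt δ * p * sb := by positivity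
    linarith
  · rw [not_and_or, not_lt, not_le] at hgood
    have e1 : δ * ∑ j, γ j ≤ δ * sb := mul_le_mul_of_nonneg_left (abs_le.mp hsg).2 hδ0
    have hδle : δ ≤ Real.sqrt δ := by
      calc δ = Real.sqrt δ * Real.sqrt δ := hq.symm
        _ ≤ Real.sqrt δ * 1 := mul_le_mul_of_nonneg_left hq1.le hq0
        _ = Real.sqrt δ := mul_one _
    have e2 : δ * sb ≤ Real.sqrt δ * sb := mul_le_mul_of_nonneg_right hδle hsb0
    have e3 : a ≤ Real.sqrt δ * sb := by
      rcases hgood with h | h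
      · exact h.trans (by positivity)
      · exact le_of_lt h
    have hbound : ∑ j, (b ᵥ* S) j ≤ 2 * Real.sqrt δ * p * sb := by
      calc ∑ j, (b ᵥ* S) j = p * (a + δ * ∑ j, γ j) := hc
        _ ≤ p * (2 * (Real.sqrt δ * sb)) :=
            mul_le_mul_of_nonneg_left (by linarith) hp0.le
        _ = 2 * Real.sqrt δ * p * sb := by ring
    have hite : 0 ≤ (if ((∑ j, (b ᵥ* S) j)⁻¹ • (b ᵥ* S)) ∈ O
        then ∑ j, (b ᵥ* S) j else 0) := by
      split
      · exact Finset.sum_nonneg fun j _ => vecMul_nonneg' hbnn hSnn j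
      · exact le_refl 0
    linarith

/-- The key transition estimate (3): with `S = M(z)M(yₙ)`, `m = |z| + |yₙ|`,
`t = 2√δₙ · π S e`, the decomposition `S/(π S e) = w v + δₙ Tₙ` with `‖Tₙ‖ ≤ 1`,
`δₙ < 1/4`, and `𝒪` containing `(v + √δₙ β)/(1 + √δₙ β e)` for all `β` in the ℓ¹ unit
ball, we have `P^{k+m}(α, 𝒪) ≥ α Mᵏ S e − t` for every `α ∈ Δ` and every `k ≥ 0`. -/
theorem stmt11 (s : ℕ) (Y : Type*) [Fintype Y]
    (M : Y → Matrix (Fin s) (Fin s) ℝ)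
    (hpos : ∀ y i j, 0 ≤ M y i j)
    (Mtot : Matrix (Fin s) (Fin s) ℝ) (hMtot : Mtot = ∑ y, M y)
    (hstoch : ∀ i, ∑ j, Mtot i j = 1)
    (π : Fin s → ℝ) (hπ : π ∈ stdSimplex ℝ (Fin s)) (hstat : π ᵥ* Mtot = π)
    (z ys : List Y)
    (S : Matrix (Fin s) (Fin s) ℝ) (hSdef : S = ((z ++ ys).map M).prod)
    (hπS : 0 < ∑ j, (π ᵥ* S) j)
    (w v : Fin s → ℝ) (hw : π ⬝ᵥ w = 1) (hv : v ∈ stdSimplex ℝ (Fin s))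
    (δ : ℝ) (hδ0 : 0 ≤ δ) (hδ : δ < 1 / 4)
    (T : Matrix (Fin s) (Fin s) ℝ)
    (hT : ∀ β : Fin s → ℝ, ∑ j, |(β ᵥ* T) j| ≤ ∑ i, |β i|)
    (hdecomp : (∑ j, (π ᵥ* S) j)⁻¹ • S = (Matrix.of fun i j => w i * v j) + δ • T)
    (O : Set (Fin s → ℝ))
    (hO : ∀ β : Fin s → ℝ, (∑ i, |β i|) ≤ 1 →
      (1 + Real.sqrt δ * ∑ j, β j)⁻¹ • (v + Real.sqrt δ • β) ∈ O)
    (t : ℝ) (ht : t = 2 * Real.sqrt δ * ∑ j, (π ᵥ* S) j)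
    (m : ℕ) (hm : m = (z ++ ys).length) :
    ∀ α ∈ stdSimplex ℝ (Fin s), ∀ k : ℕ,
      (∑ j, (α ᵥ* (Mtot ^ k * S)) j) - t ≤ Pker M (k + m) α O := by
  subst hm
  intro α hα k
  set L := z ++ ys with hL
  set p : ℝ := ∑ j, (π ᵥ* S) j with hp
  have hp0 : 0 < p := hπS
  have hS : S = p • ((Matrix.of fun i j => w i * v j) + δ • T) := by
    rw [← hdecomp, smul_smul, mul_inv_cancel₀ (ne_of_gt hp0), one_smul]
  have hSnn : ∀ i j, 0 ≤ S i j := by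
    rw [hSdef]
    apply listProd_nonneg
    intro A hA i j
    rw [List.mem_map] at hA
    obtain ⟨y, _, rfl⟩ := hA
    exact hpos y i j
  set g : Fin L.length → Y := fun i => L.get i with hg
  have hgS : wordProd M g = S := by
    rw [hSdef, wordProd]
    congr 1
    exact List.ofFn_getElem_eq_map L M
  have hq : Real.sqrt δ * Real.sqrt δ = δ := Real.mul_self_sqrt hδ0
  have hq0 : 0 ≤ Real.sqrt δ := Real.sqrt_nonneg δ
  have hq1 : Real.sqrt δ < 1 := by
    rw [show (1:ℝ) = Real.sqrt 1 by simp]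
    exact Real.sqrt_lt_sqrt hδ0 (by linarith)
  have hsv : ∑ j, v j = 1 := hv.2
  set β' : (Fin k → Y) → (Fin s → ℝ) := fun u => α ᵥ* wordProd M u with hβ'
  have hβnn : ∀ u i, 0 ≤ β' u i := fun u =>
    vecMul_nonneg' hα.1 (wordProd_nonneg M hpos u)
  have core : ∀ u : Fin k → Y,
      (∑ j, ((β' u) ᵥ* S) j) - 2 * Real.sqrt δ * p * (∑ i, β' u i) ≤
        (if ((∑ j, ((β' u) ᵥ* S) j)⁻¹ • ((β' u) ᵥ* S)) ∈ O
          then ∑ j, ((β' u) ᵥ* S) j else 0) := fun u =>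
    core_est S T w v p δ hp0 hδ0 hδ hS hSnn hsv O hO (β' u) (hβnn u) (hT (β' u))
  -- assemble the sum
  have hrow : ∀ (n : ℕ) (i : Fin s), ∑ j, (Mtot ^ n) i j = 1 := by
    intro n
    induction n with
    | zero => intro i; simp [Matrix.one_apply]
    | succ n ih =>
      intro i
      rw [pow_succ]
      simp_rw [Matrix.mul_apply]
      rw [Finset.sum_comm]
      simp_rw [← Finset.mul_sum, hstoch, mul_one]
      exact ih i
  have hword : ∀ u : Fin k → Y, wordProd M (Fin.append u g) = wordProd M u * S := by
    intro u; rw [wordProd_append, hgS]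
  have hvm : ∀ u : Fin k → Y, α ᵥ* wordProd M (Fin.append u g) = (β' u) ᵥ* S := by
    intro u; rw [hword, ← Matrix.vecMul_vecMul]
  have hterm : ∀ u : Fin k → Y,
      (∑ j, ((β' u) ᵥ* S) j) - 2 * Real.sqrt δ * p * (∑ i, β' u i) ≤
        (if ((∑ j, (α ᵥ* wordProd M (Fin.append u g)) j)⁻¹
              • (α ᵥ* wordProd M (Fin.append u g))) ∈ O
          then ∑ j, (α ᵥ* wordProd M (Fin.append u g)) j else 0) := by
    intro u
    rw [hvm]
    exact core u
  have hinj : Function.Injective (fun u : Fin k → Y => Fin.append u g) := by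
    intro u u' h
    funext i
    have := congrFun h (Fin.castAdd L.length i)
    simpa [Fin.append_left] using this
  have hF : ∀ (w' : Fin (k + L.length) → Y),
      0 ≤ (if ((∑ j, (α ᵥ* wordProd M w') j)⁻¹ • (α ᵥ* wordProd M w')) ∈ O
        then ∑ j, (α ᵥ* wordProd M w') j else 0) := by
    intro w'
    split
    · exact Finset.sum_nonneg fun j _ =>
        vecMul_nonneg' hα.1 (wordProd_nonneg M hpos w') j
    · exact le_refl 0
  have hsum1 : ∑ u : Fin k → Y, ∑ j, ((β' u) ᵥ* S) j = ∑ j, (α ᵥ* (Mtot ^ k * S)) j := by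
    have h1 : ∀ u : Fin k → Y, (β' u) ᵥ* S = α ᵥ* (wordProd M u * S) := fun u =>
      Matrix.vecMul_vecMul α (wordProd M u) S
    simp_rw [h1]
    rw [sum_sum_vecMul, ← Finset.sum_mul, sum_wordProd, ← hMtot]
  have hsum2 : ∑ u : Fin k → Y, ∑ i, β' u i = 1 := by
    rw [hβ', sum_sum_vecMul, sum_wordProd, ← hMtot, sumVecMul]
    simp_rw [hrow k, mul_one]
    exact hα.2
  calc (∑ j, (α ᵥ* (Mtot ^ k * S)) j) - t
      = ∑ u : Fin k → Y,
          ((∑ j, ((β' u) ᵥ* S) j) - 2 * Real.sqrt δ * p * (∑ i, β' u i)) := by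
        rw [Finset.sum_sub_distrib, hsum1, ← Finset.mul_sum, hsum2, mul_one, ht]
    _ ≤ ∑ u : Fin k → Y,
          (if ((∑ j, (α ᵥ* wordProd M (Fin.append u g)) j)⁻¹
                • (α ᵥ* wordProd M (Fin.append u g))) ∈ O
            then ∑ j, (α ᵥ* wordProd M (Fin.append u g)) j else 0) :=
        Finset.sum_le_sum fun u _ => hterm u
    _ = ∑ w' ∈ Finset.univ.image (fun u : Fin k → Y => Fin.append u g),
          (if ((∑ j, (α ᵥ* wordProd M w') j)⁻¹ • (α ᵥ* wordProd M w')) ∈ O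
            then ∑ j, (α ᵥ* wordProd M w') j else 0) :=
        by rw [Finset.sum_image (fun x _ y _ h => hinj h)]
    _ ≤ ∑ w' : Fin (k + L.length) → Y,
          (if ((∑ j, (α ᵥ* wordProd M w') j)⁻¹ • (α ᵥ* wordProd M w')) ∈ O
            then ∑ j, (α ᵥ* wordProd M w') j else 0) :=
        Finset.sum_le_sum_of_subset_of_nonneg (Finset.subset_univ _)
          (fun w' _ _ => hF w')
    _ = Pker M (k + L.length) α O := rfl
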